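/- The tangent lines from an exterior point p to an ellipse make equal angles with the lines joining p to the two foci (optical/isogonal property): if Q is an ellipse with foci F₁, F₂ and p is outside Q, the two tangent lines from p to Q share their angle bisectors with the lines pF₁ and pF₂. -/

import Mathlib

/-- Euclidean dot product on `ℝ × ℝ`. -/
def dot2 (u v : ℝ × ℝ) : ℝ := u.1 * v.1 + u.2 * v.2

set_option maxHeartbeats 1600000 in
/-- Optical/isogonal property of the ellipse: the two tangent lines from an
exterior point `p` to the ellipse `x²/A² + y²/B² = 1` (foci `F₁ = (c,0)`,
`F₂ = (−c,0)`, `c² = A² − B²`) share their angle bisectors with the focal rays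
`pF₁`, `pF₂`: the unoriented angle between the tangent line `p q` and `p F₁`
equals that between `p r` and `p F₂`, and likewise with the foci swapped
(stated via equality of squared cosines).  Here `q, r` are the tangency points. -/
theorem ellipse_isogonal_property (A B c : ℝ) (p q r : ℝ × ℝ)
    (hBA : B < A) (hB : 0 < B) (hc : c ^ 2 = A ^ 2 - B ^ 2)
    (hq : q.1 ^ 2 / A ^ 2 + q.2 ^ 2 / B ^ 2 = 1)
    (hr : r.1 ^ 2 / A ^ 2 + r.2 ^ 2 / B ^ 2 = 1)
    (htq : p.1 * q.1 / A ^ 2 + p.2 * q.2 / B ^ 2 = 1)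
    (htr : p.1 * r.1 / A ^ 2 + p.2 * r.2 / B ^ 2 = 1)
    (hqr : q ≠ r) (hext : 1 < p.1 ^ 2 / A ^ 2 + p.2 ^ 2 / B ^ 2) :
    (dot2 (q.1 - p.1, q.2 - p.2) (c - p.1, -p.2)) ^ 2
        * dot2 (r.1 - p.1, r.2 - p.2) (r.1 - p.1, r.2 - p.2)
        * dot2 (-c - p.1, -p.2) (-c - p.1, -p.2)
      = (dot2 (r.1 - p.1, r.2 - p.2) (-c - p.1, -p.2)) ^ 2
        * dot2 (q.1 - p.1, q.2 - p.2) (q.1 - p.1, q.2 - p.2)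
        * dot2 (c - p.1, -p.2) (c - p.1, -p.2) ∧
    (dot2 (q.1 - p.1, q.2 - p.2) (-c - p.1, -p.2)) ^ 2
        * dot2 (r.1 - p.1, r.2 - p.2) (r.1 - p.1, r.2 - p.2)
        * dot2 (c - p.1, -p.2) (c - p.1, -p.2)
      = (dot2 (r.1 - p.1, r.2 - p.2) (c - p.1, -p.2)) ^ 2
        * dot2 (q.1 - p.1, q.2 - p.2) (q.1 - p.1, q.2 - p.2)
        * dot2 (-c - p.1, -p.2) (-c - p.1, -p.2) := by
  have hA0 : (0:ℝ) < A := hB.trans hBA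
  have ha : (A:ℝ) ^ 2 ≠ 0 := by positivity
  have hb : (B:ℝ) ^ 2 ≠ 0 := by positivity
  have hq2 := hq
  have hr2 := hr
  field_simp at hq2 hr2
  obtain ⟨x1, hx1⟩ : ∃ t : ℝ, t = q.1 / A ^ 2 := ⟨_, rfl⟩
  obtain ⟨x2, hx2⟩ : ∃ t : ℝ, t = q.2 / B ^ 2 := ⟨_, rfl⟩
  obtain ⟨y1, hy1⟩ : ∃ t : ℝ, t = r.1 / A ^ 2 := ⟨_, rfl⟩
  obtain ⟨y2, hy2⟩ : ∃ t : ℝ, t = r.2 / B ^ 2 := ⟨_, rfl⟩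
  have hE1 : A ^ 2 * x1 ^ 2 + B ^ 2 * x2 ^ 2 = 1 := by
    rw [hx1, hx2]; field_simp; linear_combination hq2
  have hE2 : A ^ 2 * y1 ^ 2 + B ^ 2 * y2 ^ 2 = 1 := by
    rw [hy1, hy2]; field_simp; linear_combination hr2
  have hE4 : x1 * p.1 + x2 * p.2 = 1 := by
    rw [hx1, hx2]; linear_combination htq
  have hE5 : y1 * p.1 + y2 * p.2 = 1 := by
    rw [hy1, hy2]; linear_combination htr
  have hEq : x1 * q.1 + x2 * q.2 = 1 := by
    rw [hx1, hx2]; linear_combination hq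
  have hEr : y1 * r.1 + y2 * r.2 = 1 := by
    rw [hy1, hy2]; linear_combination hr
  -- the two tangent directions are not parallel
  have hD : x1 * y2 - x2 * y1 ≠ 0 := by
    intro h
    have hz1 : x1 - y1 = 0 := by
      linear_combination y1 * hE4 - x1 * hE5 + p.2 * h
    have hz2 : x2 - y2 = 0 := by
      linear_combination y2 * hE4 - x2 * hE5 - p.1 * h
    apply hqr
    have h1 : q.1 = r.1 := by
      have h' : q.1 / A ^ 2 = r.1 / A ^ 2 := by rw [← hx1, ← hy1]; linarith
      have h'' : q.1 / A ^ 2 * A ^ 2 = r.1 / A ^ 2 * A ^ 2 := by rw [h']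
      rwa [div_mul_cancel₀ _ ha, div_mul_cancel₀ _ ha] at h''
    have h2 : q.2 = r.2 := by
      have h' : q.2 / B ^ 2 = r.2 / B ^ 2 := by rw [← hx2, ← hy2]; linarith
      have h'' : q.2 / B ^ 2 * B ^ 2 = r.2 / B ^ 2 * B ^ 2 := by rw [h']
      rwa [div_mul_cancel₀ _ hb, div_mul_cancel₀ _ hb] at h''
    exact Prod.ext h1 h2
  -- nondegeneracy of the normal directions
  have hNx : x1 ^ 2 + x2 ^ 2 ≠ 0 := by
    intro h
    have h1 : x1 ^ 2 = 0 := by linarith [sq_nonneg x1, sq_nonneg x2]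
    have h2 : x2 ^ 2 = 0 := by linarith [sq_nonneg x1, sq_nonneg x2]
    rw [h1, h2] at hE1; simp at hE1
  have hNy : y1 ^ 2 + y2 ^ 2 ≠ 0 := by
    intro h
    have h1 : y1 ^ 2 = 0 := by linarith [sq_nonneg y1, sq_nonneg y2]
    have h2 : y2 ^ 2 = 0 := by linarith [sq_nonneg y1, sq_nonneg y2]
    rw [h1, h2] at hE2; simp at hE2
  -- the chords q-p, r-p are orthogonal to the normals
  have horthq : x1 * (q.1 - p.1) + x2 * (q.2 - p.2) = 0 := by
    linear_combination hEq - hE4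
  have horthr : y1 * (r.1 - p.1) + y2 * (r.2 - p.2) = 0 := by
    linear_combination hEr - hE5
  -- tangent direction parameters
  obtain ⟨tq, htqd⟩ : ∃ t : ℝ,
      t = (x1 * (q.2 - p.2) - x2 * (q.1 - p.1)) / (x1 ^ 2 + x2 ^ 2) := ⟨_, rfl⟩
  obtain ⟨tr, htrd⟩ : ∃ t : ℝ,
      t = (y1 * (r.2 - p.2) - y2 * (r.1 - p.1)) / (y1 ^ 2 + y2 ^ 2) := ⟨_, rfl⟩
  have htqN : tq * (x1 ^ 2 + x2 ^ 2) = x1 * (q.2 - p.2) - x2 * (q.1 - p.1) := by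
    rw [htqd]; exact div_mul_cancel₀ _ hNx
  have htrN : tr * (y1 ^ 2 + y2 ^ 2) = y1 * (r.2 - p.2) - y2 * (r.1 - p.1) := by
    rw [htrd]; exact div_mul_cancel₀ _ hNy
  have hu1 : q.1 - p.1 = -(tq * x2) :=
    mul_right_cancel₀ hNx (by linear_combination x1 * horthq + x2 * htqN)
  have hu2 : q.2 - p.2 = tq * x1 :=
    mul_right_cancel₀ hNx (by linear_combination x2 * horthq - x1 * htqN)
  have hv1 : r.1 - p.1 = -(tr * y2) :=
    mul_right_cancel₀ hNy (by linear_combination y1 * horthr + y2 * htrN)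
  have hv2 : r.2 - p.2 = tr * y1 :=
    mul_right_cancel₀ hNy (by linear_combination y2 * horthr - y1 * htrN)
  -- the two key isogonality identities
  have hkey : (p.1 * x2 - p.2 * x1 - c * x2) * (1 + c * y1)
      + (p.1 * y2 - p.2 * y1 + c * y2) * (1 - c * x1) = 0 := by
    apply mul_left_cancel₀ hD
    linear_combination (-(y1 ^ 2) - y2 ^ 2) * hE1 + (x1 ^ 2 + x2 ^ 2) * hE2
      + (x2 ^ 2 * y1 ^ 2 - x1 ^ 2 * y2 ^ 2) * hc
      + (x2 * y1 * y2 * c - x1 * y2 ^ 2 * c + x1 * y1 + y1 ^ 2 + x2 * y2 + y2 ^ 2) * hE4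
      + (-(x2 ^ 2 * y1 * c) + x1 * x2 * y2 * c - x1 ^ 2 - x2 ^ 2 - x1 * y1 - x2 * y2) * hE5
  have hkey2 : (p.1 * x2 - p.2 * x1 + c * x2) * (1 - c * y1)
      + (p.1 * y2 - p.2 * y1 - c * y2) * (1 + c * x1) = 0 := by
    apply mul_left_cancel₀ hD
    linear_combination (-(y1 ^ 2) - y2 ^ 2) * hE1 + (x1 ^ 2 + x2 ^ 2) * hE2
      + (x2 ^ 2 * y1 ^ 2 - x1 ^ 2 * y2 ^ 2) * hc
      + (-(x2 * y1 * y2 * c) + x1 * y2 ^ 2 * c + x1 * y1 + y1 ^ 2 + x2 * y2 + y2 ^ 2) * hE4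
      + (x2 ^ 2 * y1 * c - x1 * x2 * y2 * c - x1 ^ 2 - x2 ^ 2 - x1 * y1 - x2 * y2) * hE5
  constructor
  · simp only [dot2]
    rw [hu1, hu2, hv1, hv2]
    linear_combination
      (tq ^ 2 * tr ^ 2 * ((p.1 * x2 - p.2 * x1 - c * x2) * (1 + c * y1)
        - (p.1 * y2 - p.2 * y1 + c * y2) * (1 - c * x1))) * hkey
      + (tq ^ 2 * tr ^ 2 * (p.1 * x2 - p.2 * x1 - c * x2) ^ 2
        * (2 * (1 + c * y1) + (y1 * p.1 + y2 * p.2 - 1))) * hE5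
      - (tq ^ 2 * tr ^ 2 * (p.1 * y2 - p.2 * y1 + c * y2) ^ 2
        * (2 * (1 - c * x1) + (x1 * p.1 + x2 * p.2 - 1))) * hE4
  · simp only [dot2]
    rw [hu1, hu2, hv1, hv2]
    linear_combination
      (tq ^ 2 * tr ^ 2 * ((p.1 * x2 - p.2 * x1 + c * x2) * (1 - c * y1)
        - (p.1 * y2 - p.2 * y1 - c * y2) * (1 + c * x1))) * hkey2
      + (tq ^ 2 * tr ^ 2 * (p.1 * x2 - p.2 * x1 + c * x2) ^ 2
        * (2 * (1 - c * y1) + (y1 * p.1 + y2 * p.2 - 1))) * hE5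
      - (tq ^ 2 * tr ^ 2 * (p.1 * y2 - p.2 * y1 - c * y2) ^ 2
        * (2 * (1 + c * x1) + (x1 * p.1 + x2 * p.2 - 1))) * hE4
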